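/- Let p and q be distributions on a finite set satisfying the same frequencies for an antimonotonic family F, and suppose under p (hence under q, by the agreement of projected distributions on members of F) each coordinate in W is determined by the coordinates in V. If p's marginal on V is uniform and q maximizes entropy among all distributions satisfying the F-frequencies, then q = p. -/
import Mathlib


open Finset

def IsDist {Ω : Type*} [Fintype Ω] (p : Ω → ℝ) : Prop :=
  (∀ x, 0 ≤ p x) ∧ ∑ x, p x = 1

/-- The truth value of clause `i` of the 3-CNF `R` under assignment `t`; a clause is a
triple of literals, each a pair (variable, sign). -/
def clauseVal {L M : ℕ} (R : Fin M → Fin 3 → Fin L × Bool)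
    (t : Fin L → Bool) (i : Fin M) : Bool :=
  decide (∃ j : Fin 3, t (R i j).1 = (R i j).2)

/-- The construction distribution `p(V = t, W = u) = 2^{-L}` if `u = C(t)`, else `0`. -/
noncomputable def constr {L M : ℕ} (R : Fin M → Fin 3 → Fin L × Bool) :
    (Fin L → Bool) × (Fin M → Bool) → ℝ :=
  fun x => if x.2 = (fun i => clauseVal R x.1 i) then ((2 : ℝ) ^ L)⁻¹ else 0

/-- The frequency `p(S = 1, T = 1)` for an itemset with variable-part `S` and
clause-part `T`. -/
def freq2 {L M : ℕ} (p : (Fin L → Bool) × (Fin M → Bool) → ℝ)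
    (S : Finset (Fin L)) (T : Finset (Fin M)) : ℝ :=
  ∑ x : (Fin L → Bool) × (Fin M → Bool),
    if (∀ i ∈ S, x.1 i = true) ∧ (∀ j ∈ T, x.2 j = true) then p x else 0

/-- The set of variables appearing in clause `i`. -/
def clauseVars {L M : ℕ} (R : Fin M → Fin 3 → Fin L × Bool) (i : Fin M) :
    Finset (Fin L) :=
  Finset.image (fun j => (R i j).1) Finset.univ

noncomputable def entropy {Ω : Type*} [Fintype Ω] (p : Ω → ℝ) : ℝ :=
  ∑ x, Real.negMulLog (p x)

/-- If `p` and `q` satisfy the same frequencies for an antimonotonic family `F`, under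
both the `W`-coordinates are the deterministic function `C` of the `V`-coordinates,
`p`'s marginal on `V` is uniform, and `q` maximizes entropy among distributions
satisfying the `F`-frequencies, then `q = p`. -/
theorem maxent_is_construction {L M : ℕ}
    (F : Set (Finset (Fin L) × Finset (Fin M)))
    (hF : ∀ B ∈ F, ∀ S' ⊆ B.1, ∀ T' ⊆ B.2, (S', T') ∈ F)
    (p q : (Fin L → Bool) × (Fin M → Bool) → ℝ)
    (hp : IsDist p) (hq : IsDist q)
    (C : (Fin L → Bool) → (Fin M → Bool))
    (hpC : ∀ t u, u ≠ C t → p (t, u) = 0)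
    (hqC : ∀ t u, u ≠ C t → q (t, u) = 0)
    (hunif : ∀ t : Fin L → Bool, (∑ u : Fin M → Bool, p (t, u)) = ((2 : ℝ) ^ L)⁻¹)
    (hagree : ∀ B ∈ F, freq2 q B.1 B.2 = freq2 p B.1 B.2)
    (hmax : ∀ q' : (Fin L → Bool) × (Fin M → Bool) → ℝ, IsDist q' →
      (∀ B ∈ F, freq2 q' B.1 B.2 = freq2 p B.1 B.2) → entropy q' ≤ entropy q) :
    q = p := by

  classical
  -- basic notation
  set N : ℝ := (2 : ℝ) ^ L with hN
  have hNpos : (0 : ℝ) < N := by positivity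
  have hNcard : (Fintype.card (Fin L → Bool) : ℝ) = N := by
    simp [hN, Fintype.card_fun]
  -- p on the graph is uniform
  have hpg : ∀ t, p (t, C t) = N⁻¹ := by
    intro t
    have := hunif t
    rwa [Finset.sum_eq_single (C t) (fun u _ hu => hpC t u hu) (by simp)] at this
  -- entropy of a graph-supported distribution collapses to a sum over t
  have hent : ∀ (r : (Fin L → Bool) × (Fin M → Bool) → ℝ),
      (∀ t u, u ≠ C t → r (t, u) = 0) →
      entropy r = ∑ t : Fin L → Bool, Real.negMulLog (r (t, C t)) := by
    intro r hr
    rw [entropy, Fintype.sum_prod_type]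
    refine Finset.sum_congr rfl fun t _ => ?_
    rw [Finset.sum_eq_single (C t) (fun u _ hu => by rw [hr t u hu]; simp) (by simp)]
  -- entropy p
  have hentp : entropy p = ∑ _t : Fin L → Bool, Real.negMulLog N⁻¹ := by
    rw [hent p hpC]; exact Finset.sum_congr rfl fun t _ => by rw [hpg t]
  -- p ≤ q in entropy
  have hle : entropy p ≤ entropy q := hmax p hp fun _ _ => rfl
  -- sums of q over graph
  have hqsum : ∑ t : Fin L → Bool, q (t, C t) = 1 := by
    have := hq.2
    rw [Fintype.sum_prod_type] at this
    rw [← this]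
    refine Finset.sum_congr rfl fun t _ => ?_
    rw [Finset.sum_eq_single (C t) (fun u _ hu => hqC t u hu) (by simp)]
  -- Jensen equality
  have h₀ : ∀ i ∈ (Finset.univ : Finset (Fin L → Bool)), (0:ℝ) < N⁻¹ := fun _ _ => by positivity
  have h₁ : ∑ _i : Fin L → Bool, (N:ℝ)⁻¹ = 1 := by
    rw [Finset.sum_const, nsmul_eq_mul, Finset.card_univ, hNcard]
    field_simp
  have hmem : ∀ i ∈ (Finset.univ : Finset (Fin L → Bool)),
      q (i, C i) ∈ Set.Ici (0:ℝ) := fun i _ => hq.1 _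
  have hcm : ∑ i : Fin L → Bool, (N:ℝ)⁻¹ • q (i, C i) = N⁻¹ := by
    simp only [smul_eq_mul, ← Finset.mul_sum, hqsum, mul_one]
  have hjle : Real.negMulLog (∑ i : Fin L → Bool, (N:ℝ)⁻¹ • q (i, C i))
      ≤ ∑ i : Fin L → Bool, (N:ℝ)⁻¹ • Real.negMulLog (q (i, C i)) := by
    have h2 : (N:ℝ)⁻¹ * entropy p ≤ (N:ℝ)⁻¹ * entropy q := by
      apply mul_le_mul_of_nonneg_left hle (by positivity)
    rw [hentp, hent q hqC] at h2
    rw [hcm]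
    calc Real.negMulLog ((N:ℝ)⁻¹)
        = (N:ℝ)⁻¹ * ∑ _t : Fin L → Bool, Real.negMulLog N⁻¹ := by
          rw [Finset.sum_const, nsmul_eq_mul, Finset.card_univ, hNcard, ← mul_assoc, inv_mul_cancel₀ hNpos.ne',
            one_mul]
      _ ≤ (N:ℝ)⁻¹ * ∑ t : Fin L → Bool, Real.negMulLog (q (t, C t)) := h2
      _ = ∑ i : Fin L → Bool, (N:ℝ)⁻¹ • Real.negMulLog (q (i, C i)) := by
          rw [Finset.mul_sum]; rfl
  have hjge := Real.strictConcaveOn_negMulLog.concaveOn.le_map_sum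
    (fun i hi => (h₀ i hi).le) h₁ hmem
  have heq := le_antisymm hjge hjle
  have hall := (Real.strictConcaveOn_negMulLog.map_sum_eq_iff h₀ h₁ hmem).mp heq.symm
  -- conclude q = p
  funext x
  obtain ⟨t, u⟩ := x
  by_cases hu : u = C t
  · subst hu
    have := hall t (Finset.mem_univ t)
    rw [hcm] at this
    rw [this, hpg t]
  · rw [hqC t u hu, hpC t u hu]
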